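/- Let V, W, U be finite-dimensional real vector spaces, let P ⊆ V be a nonempty polytope with affineSpan ℝ P = ⊤, let Q ⊆ W be a nonempty polytope with affineSpan ℝ Q = ⊤, and let R ⊆ U be a nonempty polytope. Then the map Θ sending an affine map f : (V ⊗[ℝ] W) × V × W →ᵃ[ℝ] U to the map Θ(f) : V →ᵃ[ℝ] (W →ᵃ[ℝ] U) defined by (Θ(f) x) y = f (x ⊗ y, x, y) is well-defined (i.e., Θ(f) x is affine in y and x ↦ Θ(f) x is affine) and restricts to a bijection from {f : (V ⊗[ℝ] W) × V × W →ᵃ[ℝ] U | f '' (P ⊗ Q) ⊆ R} onto {g : V →ᵃ[ℝ] (W →ᵃ[ℝ] U) | ∀ x ∈ P, ∀ y ∈ Q, (g x) y ∈ R}; i.e., Hom(P ⊗ Q, R) ≅ Hom(P, Hom(Q,R)). -/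

import Mathlib

open scoped TensorProduct

/-- A polytope: the convex hull of a finite set of points. -/
def IsPolytope {V : Type*} [AddCommGroup V] [Module ℝ V] (P : Set V) : Prop :=
  ∃ F : Finset V, P = convexHull ℝ (F : Set V)

/-- The tensor product of two polytopes `P ⊆ V` and `Q ⊆ W`:
the convex hull of `{(x ⊗ y, x, y) : x a vertex of P, y a vertex of Q}`
in `(V ⊗[ℝ] W) × V × W`. -/
def tensorPolytope {V W : Type*} [AddCommGroup V] [Module ℝ V] [AddCommGroup W] [Module ℝ W]
    (P : Set V) (Q : Set W) : Set ((V ⊗[ℝ] W) × V × W) :=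
  convexHull ℝ
    {p | ∃ x ∈ Set.extremePoints ℝ P, ∃ y ∈ Set.extremePoints ℝ Q,
      p = (x ⊗ₜ[ℝ] y, x, y)}

namespace StmtAux

noncomputable section

variable {V W U : Type*} [AddCommGroup V] [Module ℝ V] [AddCommGroup W] [Module ℝ W]
  [AddCommGroup U] [Module ℝ U]

/-- Any affine map from a module to a module decomposes. -/
lemma aff_decomp (h : W →ᵃ[ℝ] U) (y : W) : h y = h.linear y + h 0 := by
  conv_lhs => rw [show y = y +ᵥ (0 : W) by simp]
  rw [h.map_vadd]; rfl

/-- Evaluation of affine maps at a point, as a linear map. -/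
def evalAtL (y : W) : (W →ᵃ[ℝ] U) →ₗ[ℝ] U where
  toFun h := h y
  map_add' h h' := by simp [AffineMap.coe_add]
  map_smul' c h := by simp [AffineMap.coe_smul]

/-- The affine map `y ↦ (x ⊗ y, x, y)`. -/
def ins (x : V) : W →ᵃ[ℝ] (V ⊗[ℝ] W) × V × W :=
  (LinearMap.prod (TensorProduct.mk ℝ V W x)
    (LinearMap.prod (0 : W →ₗ[ℝ] V) LinearMap.id)).toAffineMap
    + AffineMap.const ℝ W ((0 : V ⊗[ℝ] W), x, (0 : W))

@[simp] lemma ins_apply (x : V) (y : W) : ins x y = (x ⊗ₜ[ℝ] y, x, y) := by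
  simp [ins, AffineMap.coe_add, Prod.ext_iff]

@[simp] lemma ins_linear_apply (x : V) (y : W) :
    (ins (W := W) x).linear y = (x ⊗ₜ[ℝ] y, (0:V), y) := by
  simp [ins, AffineMap.add_linear, Prod.ext_iff]

/-- The candidate linear part of `Θ f`, as a bare function first. -/
def thetaFun (f : (V ⊗[ℝ] W) × V × W →ᵃ[ℝ] U) (x : V) : W →ᵃ[ℝ] U :=
  (f.linear ∘ₗ LinearMap.prod (TensorProduct.mk ℝ V W x) (0 : W →ₗ[ℝ] V × W)).toAffineMap
    + AffineMap.const ℝ W (f.linear ((0 : V ⊗[ℝ] W), x, (0 : W)))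

@[simp] lemma thetaFun_apply (f : (V ⊗[ℝ] W) × V × W →ᵃ[ℝ] U) (x : V) (y : W) :
    (thetaFun f x) y = f.linear (x ⊗ₜ[ℝ] y, x, (0 : W)) := by
  simp only [thetaFun, AffineMap.coe_add, Pi.add_apply, LinearMap.coe_toAffineMap,
    LinearMap.coe_comp, Function.comp_apply, LinearMap.prod_apply, Pi.prod,
    TensorProduct.mk_apply, LinearMap.zero_apply, AffineMap.coe_const, Function.const_apply]
  rw [← map_add]
  congr 1
  simp [Prod.ext_iff]

@[simp] lemma thetaFun_linear_apply (f : (V ⊗[ℝ] W) × V × W →ᵃ[ℝ] U) (x : V) (y : W) :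
    (thetaFun f x).linear y = f.linear (x ⊗ₜ[ℝ] y, (0 : V), (0 : W)) := by
  simp [thetaFun, AffineMap.add_linear, Prod.ext_iff]
  rfl

/-- The candidate linear part of `Θ f`. -/
def thetaLin (f : (V ⊗[ℝ] W) × V × W →ᵃ[ℝ] U) : V →ₗ[ℝ] (W →ᵃ[ℝ] U) where
  toFun := thetaFun f
  map_add' x x' := by
    apply AffineMap.ext; intro y
    rw [show (thetaFun f x + thetaFun f x') y = thetaFun f x y + thetaFun f x' y from rfl]
    simp only [thetaFun_apply]
    rw [← map_add]
    congr 1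
    simp [TensorProduct.add_tmul, Prod.ext_iff]
  map_smul' c x := by
    apply AffineMap.ext; intro y
    rw [show ((RingHom.id ℝ) c • thetaFun f x) y = c • thetaFun f x y from rfl]
    simp only [thetaFun_apply]
    rw [← map_smul]
    congr 1
    simp [TensorProduct.smul_tmul', Prod.ext_iff]

@[simp] lemma thetaLin_apply (f : (V ⊗[ℝ] W) × V × W →ᵃ[ℝ] U) (x : V) (y : W) :
    (thetaLin f x) y = f.linear (x ⊗ₜ[ℝ] y, x, (0 : W)) :=
  thetaFun_apply f x y

@[simp] lemma thetaLin_linear_apply (f : (V ⊗[ℝ] W) × V × W →ᵃ[ℝ] U) (x : V) (y : W) :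
    (thetaLin f x).linear y = f.linear (x ⊗ₜ[ℝ] y, (0 : V), (0 : W)) :=
  thetaFun_linear_apply f x y

/-- The currying map `Θ`. -/
def theta (f : (V ⊗[ℝ] W) × V × W →ᵃ[ℝ] U) : V →ᵃ[ℝ] (W →ᵃ[ℝ] U) where
  toFun x := f.comp (ins x)
  linear := thetaLin f
  map_vadd' p v := by
    apply AffineMap.ext; intro y
    rw [show (thetaLin f v +ᵥ f.comp (ins p)) y = thetaLin f v y + f.comp (ins p) y from rfl]
    rw [show (v +ᵥ p) = v + p from rfl]
    show f (ins (v + p) y) = _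
    rw [ins_apply]
    have h1 : ((v + p) ⊗ₜ[ℝ] y, v + p, y)
        = (v ⊗ₜ[ℝ] y, v, (0:W)) +ᵥ (p ⊗ₜ[ℝ] y, p, y) := by
      simp [TensorProduct.add_tmul, Prod.ext_iff]
    rw [h1, f.map_vadd]
    rw [show f.linear (v ⊗ₜ[ℝ] y, v, (0:W)) +ᵥ f (p ⊗ₜ[ℝ] y, p, y)
        = f.linear (v ⊗ₜ[ℝ] y, v, (0:W)) + f (p ⊗ₜ[ℝ] y, p, y) from rfl]
    simp only [thetaLin_apply, AffineMap.comp_apply, ins_apply]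

@[simp] lemma theta_apply (f : (V ⊗[ℝ] W) × V × W →ᵃ[ℝ] U) (x : V) (y : W) :
    (theta f x) y = f (x ⊗ₜ[ℝ] y, x, y) := by
  show f (ins x y) = _
  simp

/-- The bilinear map extracted from `g`. -/
def gBil (g : V →ᵃ[ℝ] (W →ᵃ[ℝ] U)) : V →ₗ[ℝ] W →ₗ[ℝ] U where
  toFun x := (g.linear x).linear
  map_add' x x' := by
    show (g.linear (x + x')).linear = (g.linear x).linear + (g.linear x').linear
    rw [map_add, AffineMap.add_linear]
  map_smul' c x := by
    show (g.linear (c • x)).linear = c • (g.linear x).linear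
    rw [map_smul, AffineMap.smul_linear]

/-- The inverse map `Ψ`. -/
def psi (g : V →ᵃ[ℝ] (W →ᵃ[ℝ] U)) : (V ⊗[ℝ] W) × V × W →ᵃ[ℝ] U :=
  ((TensorProduct.lift (gBil g)).comp (LinearMap.fst ℝ (V ⊗[ℝ] W) (V × W))
    + ((evalAtL (0 : W)) ∘ₗ g.linear).comp
        ((LinearMap.fst ℝ V W).comp (LinearMap.snd ℝ (V ⊗[ℝ] W) (V × W)))
    + (g 0).linear.comp
        ((LinearMap.snd ℝ V W).comp (LinearMap.snd ℝ (V ⊗[ℝ] W) (V × W)))).toAffineMap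
    + AffineMap.const ℝ _ ((g 0) 0)

lemma psi_apply (g : V →ᵃ[ℝ] (W →ᵃ[ℝ] U)) (t : V ⊗[ℝ] W) (x : V) (y : W) :
    psi g (t, x, y)
      = TensorProduct.lift (gBil g) t + (g.linear x) 0 + (g 0).linear y + (g 0) 0 := by
  simp [psi, AffineMap.coe_add, evalAtL]

lemma psi_vertex (g : V →ᵃ[ℝ] (W →ᵃ[ℝ] U)) (x : V) (y : W) :
    psi g (x ⊗ₜ[ℝ] y, x, y) = (g x) y := by
  rw [psi_apply]
  have h1 : g x = g.linear x + g 0 := by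
    have := aff_decomp (U := W →ᵃ[ℝ] U) (W := V) g x
    simpa using this
  rw [h1]
  rw [show ((g.linear x + g 0 : W →ᵃ[ℝ] U)) y = (g.linear x) y + (g 0) y by
    simp [AffineMap.coe_add]]
  rw [aff_decomp (g.linear x) y, aff_decomp (g 0) y]
  simp [TensorProduct.lift.tmul, gBil]
  abel

lemma theta_psi (g : V →ᵃ[ℝ] (W →ᵃ[ℝ] U)) : theta (psi g) = g := by
  apply AffineMap.ext; intro x
  apply AffineMap.ext; intro y
  rw [theta_apply, psi_vertex]

lemma psi_theta (f : (V ⊗[ℝ] W) × V × W →ᵃ[ℝ] U) : psi (theta f) = f := by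
  apply AffineMap.ext; rintro ⟨t, x, y⟩
  rw [psi_apply]
  have hlift : TensorProduct.lift (gBil (theta f))
      = f.linear ∘ₗ (LinearMap.inl ℝ (V ⊗[ℝ] W) (V × W)) := by
    apply TensorProduct.ext'; intro x' y'
    simp [TensorProduct.lift.tmul, gBil, theta]
    rfl
  have h1 : TensorProduct.lift (gBil (theta f)) t = f.linear (t, (0:V), (0:W)) := by
    rw [hlift]; rfl
  have h2 : ((theta f).linear x) 0 = f.linear ((0 : V ⊗[ℝ] W), x, (0:W)) := by
    show (thetaLin f x) 0 = _
    rw [thetaLin_apply]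
    simp
  have h3 : ((theta f) 0).linear y = f.linear ((0 : V ⊗[ℝ] W), (0:V), y) := by
    have hc : (f.comp (ins (0:V))).linear = f.linear ∘ₗ (ins (0:V)).linear := rfl
    show (f.comp (ins (0:V))).linear y = _
    rw [hc]
    have : (ins (W := W) (0:V)).linear y = ((0:V) ⊗ₜ[ℝ] y, (0:V), y) := ins_linear_apply 0 y
    simp only [LinearMap.coe_comp, Function.comp_apply, this]
    simp
  have h4 : ((theta f) 0) 0 = f 0 := by
    rw [theta_apply]
    simp
    rfl
  rw [h1, h2, h3, h4]
  have h5 : (t, x, y) = ((t, (0:V), (0:W)) : (V ⊗[ℝ] W) × V × W)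
      + ((0 : V ⊗[ℝ] W), x, (0:W)) + ((0 : V ⊗[ℝ] W), (0:V), y) := by
    simp [Prod.ext_iff]
  rw [aff_decomp f (t, x, y), h5, map_add, map_add]

end

end StmtAux

/-- A polytope is the convex hull of its extreme points. -/
lemma polytope_subset_hull_ext {V : Type*} [AddCommGroup V] [Module ℝ V]
    [FiniteDimensional ℝ V] {P : Set V} (hP : IsPolytope P) :
    P ⊆ convexHull ℝ (Set.extremePoints ℝ P) := by
  obtain ⟨F, rfl⟩ := hP
  set n := Module.finrank ℝ V
  let e : V ≃ₗ[ℝ] (Fin n → ℝ) := (Module.finBasis ℝ V).equivFun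
  have himg : ∀ s : Set V, e '' (convexHull ℝ s) = convexHull ℝ (e '' s) := fun s =>
    e.toLinearMap.image_convexHull s
  set K : Set (Fin n → ℝ) := convexHull ℝ (e '' (F : Set V)) with hK
  have hKfin : (e '' (F : Set V)).Finite := F.finite_toSet.image e
  have hKcomp : IsCompact K := hKfin.isCompact_convexHull (𝕜 := ℝ)
  have hKconv : Convex ℝ K := convex_convexHull ℝ _
  have hext : Set.extremePoints ℝ K ⊆ e '' (F : Set V) := extremePoints_convexHull_subset
  have hclosed : IsClosed (convexHull ℝ (Set.extremePoints ℝ K)) :=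
    ((hKfin.subset hext).isCompact_convexHull (𝕜 := ℝ)).isClosed
  have hKM : convexHull ℝ (Set.extremePoints ℝ K) = K := by
    have h := closure_convexHull_extremePoints hKcomp hKconv
    rwa [hclosed.closure_eq] at h
  -- transfer back
  have key : e '' (convexHull ℝ (F : Set V))
      ⊆ e '' (convexHull ℝ (Set.extremePoints ℝ (convexHull ℝ (F : Set V)))) := by
    rw [himg, himg, image_extremePoints e (convexHull ℝ (F : Set V)), himg]
    rw [← hK, hKM]
  exact fun x hx => by
    have := key ⟨x, hx, rfl⟩
    obtain ⟨x', hx', hxx⟩ := this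
    rwa [← e.injective hxx]

theorem stmt_15 {V W U : Type*}
    [AddCommGroup V] [Module ℝ V] [FiniteDimensional ℝ V]
    [AddCommGroup W] [Module ℝ W] [FiniteDimensional ℝ W]
    [AddCommGroup U] [Module ℝ U] [FiniteDimensional ℝ U]
    (P : Set V) (Q : Set W) (R : Set U)
    (hP : IsPolytope P) (hPne : P.Nonempty) (hPspan : affineSpan ℝ P = ⊤)
    (hQ : IsPolytope Q) (hQne : Q.Nonempty) (hQspan : affineSpan ℝ Q = ⊤)
    (hR : IsPolytope R) (hRne : R.Nonempty) :
    ∃ Θ : ((V ⊗[ℝ] W) × V × W →ᵃ[ℝ] U) → (V →ᵃ[ℝ] (W →ᵃ[ℝ] U)),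
      (∀ (f : (V ⊗[ℝ] W) × V × W →ᵃ[ℝ] U) (x : V) (y : W),
        (Θ f x) y = f (x ⊗ₜ[ℝ] y, x, y)) ∧
      Set.BijOn Θ
        {f : (V ⊗[ℝ] W) × V × W →ᵃ[ℝ] U | f '' tensorPolytope P Q ⊆ R}
        {g : V →ᵃ[ℝ] (W →ᵃ[ℝ] U) | ∀ x ∈ P, ∀ y ∈ Q, (g x) y ∈ R} := by
  classical
  obtain ⟨FR, hFR⟩ := hR
  have hRconv : Convex ℝ R := hFR ▸ convex_convexHull ℝ _
  refine ⟨StmtAux.theta, fun f x y => StmtAux.theta_apply f x y, ?_⟩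
  have hMapsΘ : Set.MapsTo StmtAux.theta
      {f : (V ⊗[ℝ] W) × V × W →ᵃ[ℝ] U | f '' tensorPolytope P Q ⊆ R}
      {g : V →ᵃ[ℝ] (W →ᵃ[ℝ] U) | ∀ x ∈ P, ∀ y ∈ Q, (g x) y ∈ R} := by
    intro f hf
    -- step 1 : extreme vertices
    have hvert : ∀ x ∈ Set.extremePoints ℝ P, ∀ y ∈ Set.extremePoints ℝ Q,
        (StmtAux.theta f x) y ∈ R := by
      intro x hx y hy
      rw [StmtAux.theta_apply]
      apply hf
      exact ⟨(x ⊗ₜ[ℝ] y, x, y),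
        subset_convexHull ℝ _ ⟨x, hx, y, hy, rfl⟩, rfl⟩
    -- step 2 : all of P, extreme y
    have hstep2 : ∀ y ∈ Set.extremePoints ℝ Q, ∀ x ∈ P,
        (StmtAux.theta f x) y ∈ R := by
      intro y hy x hx
      have hconv : Convex ℝ
          ((((StmtAux.evalAtL (U := U) y)).toAffineMap.comp (StmtAux.theta f)) ⁻¹' R) :=
        hRconv.affine_preimage _
      have hsub : Set.extremePoints ℝ P
          ⊆ (((StmtAux.evalAtL (U := U) y)).toAffineMap.comp (StmtAux.theta f)) ⁻¹' R := by
        intro x' hx'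
        exact hvert x' hx' y hy
      have := convexHull_min hsub hconv (polytope_subset_hull_ext hP hx)
      exact this
    -- step 3 : all of P and Q
    intro x hx y hy
    have hconv : Convex ℝ ((StmtAux.theta f x) ⁻¹' R) := hRconv.affine_preimage _
    have hsub : Set.extremePoints ℝ Q ⊆ (StmtAux.theta f x) ⁻¹' R := fun y' hy' =>
      hstep2 y' hy' x hx
    exact convexHull_min hsub hconv (polytope_subset_hull_ext hQ hy)
  have hMapsΨ : Set.MapsTo StmtAux.psi
      {g : V →ᵃ[ℝ] (W →ᵃ[ℝ] U) | ∀ x ∈ P, ∀ y ∈ Q, (g x) y ∈ R}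
      {f : (V ⊗[ℝ] W) × V × W →ᵃ[ℝ] U | f '' tensorPolytope P Q ⊆ R} := by
    intro g hg
    show StmtAux.psi g '' tensorPolytope P Q ⊆ R
    rw [tensorPolytope, AffineMap.image_convexHull]
    apply convexHull_min _ hRconv
    rintro _ ⟨_, ⟨x, hx, y, hy, rfl⟩, rfl⟩
    rw [StmtAux.psi_vertex]
    exact hg x (extremePoints_subset hx) y (extremePoints_subset hy)
  have hInv : Set.InvOn StmtAux.psi StmtAux.theta
      {f : (V ⊗[ℝ] W) × V × W →ᵃ[ℝ] U | f '' tensorPolytope P Q ⊆ R}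
      {g : V →ᵃ[ℝ] (W →ᵃ[ℝ] U) | ∀ x ∈ P, ∀ y ∈ Q, (g x) y ∈ R} :=
    ⟨fun f _ => StmtAux.psi_theta f, fun g _ => StmtAux.theta_psi g⟩
  exact hInv.bijOn hMapsΘ hMapsΨ
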